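/- Let L > 0 and let u : [0,L] → [0,π] be continuous. Define γ : [0,L] → ℝ² by γ(s) = (∫₀ˢ cos u(τ) dτ, ∫₀ˢ sin u(τ) dτ). Then γ is injective on [0,L]. -/
import Mathlib


open Real Set intervalIntegral

/-- A continuous nonnegative function on `[s,t]` with zero integral vanishes. -/
lemma aux_zero_of_nonneg {f : ℝ → ℝ} {s t : ℝ} (hst : s < t)
    (hf : ContinuousOn f (Set.Icc s t)) (h0 : ∀ τ ∈ Set.Icc s t, 0 ≤ f τ)
    (hint : (∫ τ in s..t, f τ) = 0) : ∀ τ ∈ Set.Icc s t, f τ = 0 := by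
  by_contra h
  push_neg at h
  obtain ⟨τ0, hτ0, hne⟩ := h
  have hpos : 0 < f τ0 := lt_of_le_of_ne (h0 τ0 hτ0) (Ne.symm hne)
  have hev : ∀ᶠ x in nhdsWithin τ0 (Set.Icc s t), f τ0 / 2 < f x :=
    (hf τ0 hτ0).eventually (eventually_gt_nhds (by linarith))
  obtain ⟨δ, hδ, hball⟩ := Metric.mem_nhdsWithin_iff.mp hev
  set a := max s (τ0 - δ / 2) with ha
  set b := min t (τ0 + δ / 2) with hb
  have hab : a < b := by
    apply max_lt <;> apply lt_min
    · exact hst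
    · linarith [hτ0.1]
    · linarith [hτ0.2]
    · linarith
  have hsub : Set.Icc a b ⊆ Set.Icc s t := by
    apply Set.Icc_subset_Icc (le_max_left _ _) (min_le_left _ _)
  have hball' : ∀ x ∈ Set.Icc a b, f τ0 / 2 < f x := by
    intro x hx
    apply hball
    refine ⟨Metric.mem_ball.mpr ?_, hsub hx⟩
    rw [Real.dist_eq, abs_lt]
    have h1 : τ0 - δ / 2 ≤ x := le_trans (le_max_right _ _) hx.1
    have h2 : x ≤ τ0 + δ / 2 := le_trans hx.2 (min_le_right _ _)
    constructor <;> linarith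
  have hfint : IntervalIntegrable f MeasureTheory.volume s t :=
    hf.intervalIntegrable_of_Icc hst.le
  have hlow : (b - a) * (f τ0 / 2) ≤ ∫ τ in a..b, f τ := by
    have := intervalIntegral.integral_mono_on (f := fun _ => f τ0 / 2) (g := f) hab.le
      intervalIntegrable_const (hfint.mono_set (by rw [Set.uIcc_of_le hab.le, Set.uIcc_of_le hst.le]; exact hsub)) (fun x hx => (hball' x hx).le)
    simpa [intervalIntegral.integral_const, smul_eq_mul, mul_div_assoc] using this
  have hmono : (∫ τ in a..b, f τ) ≤ ∫ τ in s..t, f τ := by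
    apply intervalIntegral.integral_mono_interval (le_max_left _ _) hab.le (min_le_left _ _)
      _ hfint
    filter_upwards [MeasureTheory.ae_restrict_mem measurableSet_Ioc] with x hx
    exact h0 x ⟨hx.1.le, hx.2⟩
  have : 0 < (b - a) * (f τ0 / 2) := by
    have : 0 < b - a := by linarith
    positivity
  linarith [hlow, hmono, hint ▸ hmono]

theorem stmt_0 (L : ℝ) (hL : 0 < L) (u : ℝ → ℝ)
    (hu : ContinuousOn u (Set.Icc 0 L))
    (hrange : ∀ s ∈ Set.Icc 0 L, u s ∈ Set.Icc (0:ℝ) Real.pi) :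
    Set.InjOn (fun s : ℝ =>
      ((∫ τ in (0:ℝ)..s, Real.cos (u τ)), (∫ τ in (0:ℝ)..s, Real.sin (u τ))))
      (Set.Icc 0 L) := by
  -- key: if s ≤ t and γ s = γ t then s = t
  have key : ∀ s ∈ Set.Icc 0 L, ∀ t ∈ Set.Icc 0 L, s ≤ t →
      ((∫ τ in (0:ℝ)..s, Real.cos (u τ)) = (∫ τ in (0:ℝ)..t, Real.cos (u τ))) →
      ((∫ τ in (0:ℝ)..s, Real.sin (u τ)) = (∫ τ in (0:ℝ)..t, Real.sin (u τ))) →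
      s = t := by
    intro s hs t ht hle hcos hsin
    by_contra hne
    have hst : s < t := lt_of_le_of_ne hle hne
    have hsubL : Set.Icc s t ⊆ Set.Icc 0 L := Set.Icc_subset_Icc hs.1 ht.2
    have hcu : ContinuousOn (fun τ => Real.cos (u τ)) (Set.Icc 0 L) :=
      Real.continuous_cos.comp_continuousOn hu
    have hsu : ContinuousOn (fun τ => Real.sin (u τ)) (Set.Icc 0 L) :=
      Real.continuous_sin.comp_continuousOn hu
    have hi : ∀ r ∈ Set.Icc 0 L, ∀ f : ℝ → ℝ, ContinuousOn f (Set.Icc 0 L) →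
        IntervalIntegrable f MeasureTheory.volume 0 r := by
      intro r hr f hf
      exact (hf.mono (Set.Icc_subset_Icc le_rfl hr.2)).intervalIntegrable_of_Icc hr.1
    have hsin0 : (∫ τ in s..t, Real.sin (u τ)) = 0 := by
      rw [← intervalIntegral.integral_interval_sub_left (hi t ht _ hsu) (hi s hs _ hsu), hsin,
        sub_self]
    have hcos0 : (∫ τ in s..t, Real.cos (u τ)) = 0 := by
      rw [← intervalIntegral.integral_interval_sub_left (hi t ht _ hcu) (hi s hs _ hcu), hcos,
        sub_self]
    -- sin (u τ) = 0 on [s,t]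
    have hsinz : ∀ τ ∈ Set.Icc s t, Real.sin (u τ) = 0 := by
      apply aux_zero_of_nonneg hst (hsu.mono hsubL) _ hsin0
      intro τ hτ
      have := hrange τ (hsubL hτ)
      exact Real.sin_nonneg_of_nonneg_of_le_pi this.1 this.2
    -- hence cos (u τ) = ±1 on [s,t]
    have hcospm : ∀ τ ∈ Set.Icc s t, Real.cos (u τ) = 1 ∨ Real.cos (u τ) = -1 := by
      intro τ hτ
      have hr := hrange τ (hsubL hτ)
      rcases eq_or_lt_of_le hr.2 with h | h
      · right; rw [h, Real.cos_pi]
      · left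
        have : u τ = 0 := by
          rw [← Real.sin_eq_zero_iff_of_lt_of_lt (by linarith [Real.pi_pos, hr.1]) h]
          exact hsinz τ hτ
        rw [this, Real.cos_zero]
    -- cos (u ·) is constant on [s,t] by connectedness
    have hconst : ∀ τ ∈ Set.Icc s t, Real.cos (u τ) = Real.cos (u s) := by
      intro τ hτ
      by_contra hne'
      have hsmem : s ∈ Set.Icc s t := ⟨le_rfl, hle⟩
      have hS : IsPreconnected ((fun τ => Real.cos (u τ)) '' Set.Icc s t) :=
        isPreconnected_Icc.image _ (hcu.mono hsubL)
      have h1 : Real.cos (u τ) ∈ (fun τ => Real.cos (u τ)) '' Set.Icc s t :=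
        ⟨τ, hτ, rfl⟩
      have h2 : Real.cos (u s) ∈ (fun τ => Real.cos (u τ)) '' Set.Icc s t :=
        ⟨s, hsmem, rfl⟩
      have h0mem : (0:ℝ) ∈ (fun τ => Real.cos (u τ)) '' Set.Icc s t := by
        rcases hcospm τ hτ with hτ1 | hτ1 <;> rcases hcospm s hsmem with hs1 | hs1
        · exact absurd (hτ1.trans hs1.symm) hne'
        · exact hS.Icc_subset h2 h1 (by rw [hτ1, hs1]; norm_num)
        · exact hS.Icc_subset h1 h2 (by rw [hτ1, hs1]; norm_num)
        · exact absurd (hτ1.trans hs1.symm) hne'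
      obtain ⟨c, hc, hc0⟩ := h0mem
      rcases hcospm c hc with h | h <;> simp [h] at hc0 <;> linarith
    -- so the cos-integral is ±(t - s) ≠ 0
    have : (∫ τ in s..t, Real.cos (u τ)) = (t - s) * Real.cos (u s) := by
      rw [intervalIntegral.integral_congr (g := fun _ => Real.cos (u s))
        (by rw [Set.uIcc_of_le hle]; exact hconst)]
      simp [smul_eq_mul]
    rw [hcos0] at this
    rcases hcospm s ⟨le_rfl, hle⟩ with h | h <;> rw [h] at this <;> nlinarith
  intro s hs t ht heq
  simp only [Prod.mk.injEq] at heq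
  rcases le_total s t with h | h
  · exact key s hs t ht h heq.1 heq.2
  · exact (key t ht s hs h heq.1.symm heq.2.symm).symm
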